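/- Let σ be a 3 2 1-avoiding permutation of {1,...,ℓ}, corresponding under the Robinson-Schensted correspondence to the pair (P, Q) of two-row standard tableaux. Then for each s with σ(s) < s, the entry s lies in the second row of the recording tableau Q if and only if there exists r < s with σ(r) > σ(s) and σ(r) > r, paired uniquely with s in the sense that the value σ(s) bumps σ(r) out of the first row during the insertion process. -/

import Mathlib

/-- A permutation `σ` of `{1,…,ℓ}` (modeled as `Fin ℓ`) is `3 2 1`-avoiding if there do not
exist `a < b < c` with `σ c < σ b < σ a`. -/
def Avoids321 {ℓ : ℕ} (σ : Equiv.Perm (Fin ℓ)) : Prop :=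
  ¬ ∃ a b c : Fin ℓ, a < b ∧ b < c ∧ σ c < σ b ∧ σ b < σ a

/-- Robinson–Schensted row insertion of `x` into a single row: `x` is appended at the end
if it is larger than all entries; otherwise it replaces (bumps) the smallest entry `y > x`.
Returns the new row together with the bumped entry, if any. -/
def rowInsert (x : ℕ) : List ℕ → List ℕ × Option ℕ
  | [] => ([x], none)
  | y :: ys =>
    if x < y then (x :: ys, some y)
    else
      let p := rowInsert x ys
      (y :: p.1, p.2)

/-- Robinson–Schensted insertion of `x` into a tableau (a list of rows): insert into the
first row; a bumped entry is inserted into the subsequent rows. Returns the new tableau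
together with the (0-indexed) row in which the new box was created. -/
def insertTableau (x : ℕ) : List (List ℕ) → List (List ℕ) × ℕ
  | [] => ([[x]], 0)
  | r :: rest =>
    match rowInsert x r with
    | (r', none) => (r' :: rest, 0)
    | (r', some y) =>
      let p := insertTableau y rest
      (r' :: p.1, p.2 + 1)

/-- Robinson–Schensted insertion of a word: returns the insertion tableau `P` together with
the list whose `s`-th entry (0-indexed) is the row of `P` in which the box created at step
`s` appears — equivalently, the row of the recording tableau `Q` containing entry `s+1`. -/
def RSsteps (w : List ℕ) : List (List ℕ) × List ℕ :=
  w.foldl (fun p x => let q := insertTableau x p.1; (q.1, p.2 ++ [q.2])) ([], [])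

/-- The word of a permutation `σ` of `Fin ℓ`: `σ(1), σ(2), …, σ(ℓ)`. -/
def permWord {ℓ : ℕ} (σ : Equiv.Perm (Fin ℓ)) : List ℕ :=
  List.ofFn fun i => (σ i : ℕ)

/-! ### Auxiliary lemmas on `rowInsert` -/

lemma rowInsert_none_of_forall (x : ℕ) : ∀ l : List ℕ, (∀ y ∈ l, ¬ x < y) →
    rowInsert x l = (l ++ [x], none)
  | [], _ => rfl
  | y :: ys, h => by
    have hy : ¬ x < y := h y (by simp)
    simp only [rowInsert, if_neg hy]
    rw [rowInsert_none_of_forall x ys (fun z hz => h z (by simp [hz]))]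
    rfl

lemma rowInsert_none_spec (x : ℕ) : ∀ (l l' : List ℕ),
    rowInsert x l = (l', none) → (∀ y ∈ l, ¬ x < y) ∧ l' = l ++ [x]
  | [], l', h => by
    simp only [rowInsert, Prod.mk.injEq] at h
    exact ⟨by simp, h.1.symm⟩
  | a :: as, l', h => by
    by_cases hxa : x < a
    · simp [rowInsert, if_pos hxa] at h
    · simp only [rowInsert, if_neg hxa] at h
      obtain ⟨h1, h2⟩ : a :: (rowInsert x as).1 = l' ∧ (rowInsert x as).2 = none := by
        simpa [Prod.ext_iff] using h
      obtain ⟨hf, he⟩ := rowInsert_none_spec x as (rowInsert x as).1 (by rw [← h2])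
      subst h1
      refine ⟨?_, by rw [he]; simp⟩
      intro y hy
      rcases List.mem_cons.1 hy with rfl | hy
      · exact hxa
      · exact hf y hy

lemma rowInsert_some_spec (x : ℕ) : ∀ (l l' : List ℕ) (y : ℕ),
    rowInsert x l = (l', some y) →
      x < y ∧ y ∈ l ∧ (l' ++ [y]).Perm (l ++ [x])
  | [], l', y, h => by simp [rowInsert] at h
  | a :: as, l', y, h => by
    by_cases hxa : x < a
    · simp only [rowInsert, if_pos hxa] at h
      obtain ⟨rfl, rfl⟩ : x :: as = l' ∧ a = y := by
        simpa [Prod.ext_iff] using h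
      refine ⟨hxa, by simp, ?_⟩
      refine List.perm_iff_count.mpr fun z => ?_
      simp [List.count_append, List.count_cons]
      omega
    · simp only [rowInsert, if_neg hxa] at h
      obtain ⟨h1, h2⟩ : a :: (rowInsert x as).1 = l' ∧ (rowInsert x as).2 = some y := by
        simpa [Prod.ext_iff] using h
      obtain ⟨hx, hy, hp⟩ := rowInsert_some_spec x as (rowInsert x as).1 y
        (by rw [← h2])
      subst h1
      exact ⟨hx, by simp [hy], by simpa using hp.cons a⟩

lemma rowInsert_some_min (x : ℕ) : ∀ (l l' : List ℕ) (y : ℕ),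
    List.Pairwise (· < ·) l → rowInsert x l = (l', some y) →
      ∀ z ∈ l, z < y → ¬ x < z
  | [], l', y, _, h => by simp [rowInsert] at h
  | a :: as, l', y, hs, h => by
    rw [List.pairwise_cons] at hs
    by_cases hxa : x < a
    · simp only [rowInsert, if_pos hxa] at h
      obtain ⟨rfl, rfl⟩ : x :: as = l' ∧ a = y := by simpa [Prod.ext_iff] using h
      intro z hz hzy
      rcases List.mem_cons.1 hz with rfl | hz
      · exact absurd hzy (lt_irrefl _)
      · exact absurd hzy (not_lt.2 (hs.1 z hz).le)
    · simp only [rowInsert, if_neg hxa] at h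
      obtain ⟨h1, h2⟩ : a :: (rowInsert x as).1 = l' ∧ (rowInsert x as).2 = some y := by
        simpa [Prod.ext_iff] using h
      intro z hz hzy
      rcases List.mem_cons.1 hz with rfl | hz
      · exact hxa
      · exact rowInsert_some_min x as _ y hs.2 (by rw [← h2]) z hz hzy

lemma rowInsert_some_sorted (x : ℕ) : ∀ (l l' : List ℕ) (y : ℕ),
    List.Pairwise (· < ·) l → x ∉ l → rowInsert x l = (l', some y) →
      List.Pairwise (· < ·) l'
  | [], l', y, _, _, h => by simp [rowInsert] at h
  | a :: as, l', y, hs, hx, h => by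
    rw [List.pairwise_cons] at hs
    by_cases hxa : x < a
    · simp only [rowInsert, if_pos hxa] at h
      obtain ⟨rfl, rfl⟩ : x :: as = l' ∧ a = y := by simpa [Prod.ext_iff] using h
      exact List.pairwise_cons.2 ⟨fun z hz => hxa.trans (hs.1 z hz), hs.2⟩
    · simp only [rowInsert, if_neg hxa] at h
      obtain ⟨h1, h2⟩ : a :: (rowInsert x as).1 = l' ∧ (rowInsert x as).2 = some y := by
        simpa [Prod.ext_iff] using h
      have hax : a < x := lt_of_le_of_ne (not_lt.1 hxa) (fun e => hx (by simp [e]))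
      have hxas : x ∉ as := fun m => hx (by simp [m])
      obtain ⟨_, _, hp⟩ := rowInsert_some_spec x as (rowInsert x as).1 y (by rw [← h2])
      have hsorted := rowInsert_some_sorted x as (rowInsert x as).1 y hs.2 hxas (by rw [← h2])
      subst h1
      refine List.pairwise_cons.2 ⟨fun z hz => ?_, hsorted⟩
      have : z ∈ as ++ [x] := hp.subset (by simp [hz])
      rcases List.mem_append.1 this with hz' | hz'
      · exact hs.1 z hz'
      · simp at hz'; omega

/-! ### Auxiliary lemmas on `RSsteps` -/

lemma RSsteps_concat (u : List ℕ) (x : ℕ) :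
    RSsteps (u ++ [x]) =
      ((insertTableau x (RSsteps u).1).1,
        (RSsteps u).2 ++ [(insertTableau x (RSsteps u).1).2]) := by
  simp [RSsteps, List.foldl_append]

lemma foldl_snd_length : ∀ (w : List ℕ) (p : List (List ℕ) × List ℕ),
    (w.foldl (fun p x => let q := insertTableau x p.1; (q.1, p.2 ++ [q.2])) p).2.length
      = p.2.length + w.length
  | [], p => by simp
  | x :: xs, p => by
    rw [List.foldl_cons, foldl_snd_length xs]
    simp
    omega

lemma RSsteps_snd_length (w : List ℕ) : (RSsteps w).2.length = w.length := by
  simpa [RSsteps] using foldl_snd_length w ([], [])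

lemma foldl_snd_prefix : ∀ (v : List ℕ) (p : List (List ℕ) × List ℕ),
    ∃ t, (v.foldl (fun p x => let q := insertTableau x p.1; (q.1, p.2 ++ [q.2])) p).2
      = p.2 ++ t
  | [], p => ⟨[], by simp⟩
  | x :: xs, p => by
    obtain ⟨t, ht⟩ := foldl_snd_prefix xs
      (let q := insertTableau x p.1; (q.1, p.2 ++ [q.2]))
    exact ⟨[(insertTableau x p.1).2] ++ t, by rw [List.foldl_cons, ht]; simp⟩

lemma RSsteps_prefix (u v : List ℕ) :
    ∃ t, (RSsteps (u ++ v)).2 = (RSsteps u).2 ++ t := by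
  rw [RSsteps, List.foldl_append]
  exact foldl_snd_prefix v _

lemma permWord_nodup {ℓ : ℕ} (σ : Equiv.Perm (Fin ℓ)) : (permWord σ).Nodup := by
  rw [permWord, List.nodup_ofFn]
  exact fun a b h => σ.injective (Fin.val_injective h)

lemma mem_take_permWord {ℓ : ℕ} (σ : Equiv.Perm (Fin ℓ)) {n : ℕ} (hn : n ≤ ℓ) {v : ℕ}
    (h : v ∈ (permWord σ).take n) : ∃ a : Fin ℓ, (a : ℕ) < n ∧ (σ a : ℕ) = v := by
  obtain ⟨i, hi, hv⟩ := List.getElem_of_mem h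
  have hlen : ((permWord σ).take n).length = n := by
    simp [permWord, List.length_take]; omega
  rw [hlen] at hi
  have hiℓ : i < ℓ := lt_of_lt_of_le hi hn
  refine ⟨⟨i, hiℓ⟩, hi, ?_⟩
  rw [List.getElem_take] at hv
  rw [← hv]
  simp [permWord]

lemma take_succ_permWord {ℓ : ℕ} (σ : Equiv.Perm (Fin ℓ)) {n : ℕ} (hn : n < ℓ) :
    (permWord σ).take (n + 1) = (permWord σ).take n ++ [(σ ⟨n, hn⟩ : ℕ)] := by
  rw [List.take_succ]
  congr 1
  have hn' : n < (permWord σ).length := by simp [permWord]; omega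
  rw [List.getElem?_eq_getElem hn']
  simp [permWord]

/-! ### Combinatorial lemmas on 321-avoiding permutations -/

lemma legal_step {ℓ : ℕ} {σ : Equiv.Perm (Fin ℓ)} (hσ : Avoids321 σ)
    {a b c : Fin ℓ} (hab : a < b) (hbc : b < c) (h : σ b < σ a) : σ b < σ c := by
  rcases lt_trichotomy (σ c) (σ b) with h1 | h1 | h1
  · exact absurd ⟨a, b, c, hab, hbc, h1, h⟩ hσ
  · exact absurd (σ.injective h1) (ne_of_gt hbc)
  · exact h1

lemma excedance_of_bump {ℓ : ℕ} {σ : Equiv.Perm (Fin ℓ)} (hσ : Avoids321 σ)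
    {r s : Fin ℓ} (hrs : r < s) (h1 : σ s < σ r) : r < σ r := by
  by_contra hnot
  have hle : σ r ≤ r := not_lt.1 hnot
  have hall : ∀ t : Fin ℓ, t < r → σ t < σ r := by
    intro t ht
    rcases lt_trichotomy (σ t) (σ r) with h2 | h2 | h2
    · exact h2
    · exact absurd (σ.injective h2) (ne_of_lt ht)
    · exact absurd ⟨t, r, s, ht, hrs, h1, h2⟩ hσ
  have hmaps : ∀ t ∈ Finset.Iio r, σ t ∈ Finset.Iio (σ r) := by
    intro t ht; simp only [Finset.mem_Iio] at *; exact hall t ht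
  have hcard : (r : ℕ) ≤ (σ r : ℕ) := by
    have := Finset.card_le_card_of_injOn σ hmaps (σ.injective.injOn)
    simpa [Fin.card_Iio] using this
  have heq : σ r = r := le_antisymm hle hcard
  have himage : Finset.image σ (Finset.Iio r) = Finset.Iio r := by
    apply Finset.eq_of_subset_of_card_le
    · intro v hv
      obtain ⟨t, ht, rfl⟩ := Finset.mem_image.1 hv
      rw [Finset.mem_Iio] at *
      calc σ t < σ r := hall t ht
        _ = r := heq
    · rw [Finset.card_image_of_injective _ σ.injective]
  have hss : σ s ∈ Finset.Iio r := by rw [Finset.mem_Iio, ← heq]; exact h1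
  rw [← himage] at hss
  obtain ⟨t, ht, hts⟩ := Finset.mem_image.1 hss
  rw [Finset.mem_Iio] at ht
  have : t = s := σ.injective hts
  subst this
  exact absurd (ht.trans hrs) (lt_irrefl _)

/-! ### The tableau invariant -/

def TabInv {ℓ : ℕ} (σ : Equiv.Perm (Fin ℓ)) (n : ℕ) (T : List (List ℕ)) : Prop :=
  ∃ R1 R2 : List ℕ,
    ((T = [] ∧ R1 = [] ∧ R2 = []) ∨ (T = [R1] ∧ R2 = []) ∨ T = [R1, R2]) ∧
    List.Pairwise (· < ·) R1 ∧
    (R1 ++ R2).Perm ((permWord σ).take n) ∧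
    (∀ y ∈ R1, ∀ z ∈ R2, y < z →
      ∃ a b : Fin ℓ, a < b ∧ (b : ℕ) < n ∧ σ b < σ a ∧ y ≤ (σ b : ℕ))

lemma tabInv {ℓ : ℕ} (σ : Equiv.Perm (Fin ℓ)) (hσ : Avoids321 σ) :
    ∀ n, n ≤ ℓ → TabInv σ n (RSsteps ((permWord σ).take n)).1
  | 0, _ => ⟨[], [], by simp [RSsteps], by simp, by simp [RSsteps], by simp⟩
  | (n+1), hn => by
    have hnℓ : n < ℓ := hn
    obtain ⟨R1, R2, hshape, hsort, hperm, hinv⟩ := tabInv σ hσ n (le_of_lt hnℓ)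
    set x : ℕ := (σ ⟨n, hnℓ⟩ : ℕ) with hxdef
    have htake : (permWord σ).take (n+1) = (permWord σ).take n ++ [x] :=
      take_succ_permWord σ hnℓ
    have hxfresh : x ∉ (permWord σ).take n := by
      have hnd : ((permWord σ).take (n+1)).Nodup :=
        (permWord_nodup σ).sublist (List.take_sublist _ _)
      rw [htake, List.nodup_append] at hnd
      intro hmem
      exact hnd.2.2 x hmem x (by simp) rfl
    have hlegal : ∀ a b : Fin ℓ, a < b → (b : ℕ) < n → σ b < σ a → (σ b : ℕ) < x := by
      intro a b hab hbn hba
      have hbs : b < (⟨n, hnℓ⟩ : Fin ℓ) := hbn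
      exact legal_step hσ hab hbs hba
    have hmemrow : ∀ v, v ∈ R1 ++ R2 → ∃ a : Fin ℓ, (a : ℕ) < n ∧ (σ a : ℕ) = v :=
      fun v hv => mem_take_permWord σ (le_of_lt hnℓ) (hperm.subset hv)
    have hxR1 : x ∉ R1 := fun h => hxfresh (hperm.subset (by simp [h]))
    rw [htake, RSsteps_concat]
    rcases hshape with ⟨hT0, hR1, hR2⟩ | ⟨hT1, hR2⟩ | hT2
    · -- T = []
      subst hR1; subst hR2
      have hempty : (permWord σ).take n = [] := by simpa using hperm.symm
      refine ⟨[x], [], ?_, by simp, ?_, by simp⟩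
      · right; left; rw [hT0]; simp [insertTableau]
      · rw [htake, hempty]; simp
    · -- T = [R1], R2 = []
      subst hR2
      rw [hT1]
      have hpermR1 : R1.Perm ((permWord σ).take n) := by simpa using hperm
      rcases hro : rowInsert x R1 with ⟨R1', _ | y0⟩
      · obtain ⟨hforall, rfl⟩ := rowInsert_none_spec x R1 R1' hro
        refine ⟨R1 ++ [x], [], ?_, ?_, ?_, by simp⟩
        · right; left; simp [insertTableau, hro]
        · refine List.pairwise_append.2 ⟨hsort, by simp, ?_⟩
          intro a ha b hb
          simp at hb; subst hb
          exact lt_of_le_of_ne (not_lt.1 (hforall a ha))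
            (fun e => hxR1 (e ▸ ha))
        · rw [htake]
          simpa using hpermR1.append_right [x]
      · obtain ⟨hxy0, hy0R1, hpermR⟩ := rowInsert_some_spec x R1 R1' y0 hro
        obtain ⟨a0, ha0n, ha0v⟩ := hmemrow y0 (by simp [hy0R1])
        refine ⟨R1', [y0], ?_, ?_, ?_, ?_⟩
        · right; right; simp [insertTableau, hro]
        · exact rowInsert_some_sorted x R1 R1' y0 hsort hxR1 hro
        · rw [htake]
          exact hpermR.trans (hpermR1.append_right [x])
        · intro y hy z hz hyz
          simp only [List.mem_singleton] at hz
          refine ⟨a0, ⟨n, hnℓ⟩, (Fin.lt_def).2 ha0n, by simp, ?_, ?_⟩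
          · rw [Fin.lt_def, ha0v]; exact hxy0
          · -- y ≤ x
            have hy' : y ∈ R1 ++ [x] := hpermR.subset (by simp [hy])
            rcases List.mem_append.1 hy' with hy' | hy'
            · exact not_lt.1 (rowInsert_some_min x R1 R1' y0 hsort hro y hy' (hz ▸ hyz))
            · simp at hy'; omega
    · -- T = [R1, R2]
      rw [hT2]
      rcases hro : rowInsert x R1 with ⟨R1', _ | y0⟩
      · obtain ⟨hforall, rfl⟩ := rowInsert_none_spec x R1 R1' hro
        refine ⟨R1 ++ [x], R2, ?_, ?_, ?_, ?_⟩
        · right; right; simp [insertTableau, hro]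
        · refine List.pairwise_append.2 ⟨hsort, by simp, ?_⟩
          intro a ha b hb
          simp at hb; subst hb
          exact lt_of_le_of_ne (not_lt.1 (hforall a ha)) (fun e => hxR1 (e ▸ ha))
        · rw [htake]
          refine List.perm_iff_count.mpr fun c => ?_
          have h2 := List.perm_iff_count.1 hperm c
          simp only [List.count_append] at h2 ⊢
          omega
        · intro y hy z hz hyz
          rcases List.mem_append.1 hy with hy' | hy'
          · obtain ⟨a, b, hab, hbn, hba, hyb⟩ := hinv y hy' z hz hyz
            exact ⟨a, b, hab, by omega, hba, hyb⟩
          · simp at hy'; subst hy'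
            obtain ⟨a, han, hav⟩ := hmemrow z (by simp [hz])
            refine ⟨a, ⟨n, hnℓ⟩, (Fin.lt_def).2 han, by simp, ?_, le_refl _⟩
            rw [Fin.lt_def, hav]; exact hyz
      · obtain ⟨hxy0, hy0R1, hpermR⟩ := rowInsert_some_spec x R1 R1' y0 hro
        obtain ⟨a0, ha0n, ha0v⟩ := hmemrow y0 (by simp [hy0R1])
        have hnb : ∀ z ∈ R2, ¬ y0 < z := by
          intro z hz hlt
          obtain ⟨a, b, hab, hbn, hba, hyb⟩ := hinv y0 hy0R1 z hz hlt
          have := hlegal a b hab hbn hba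
          omega
        have hrow2 := rowInsert_none_of_forall y0 R2 hnb
        refine ⟨R1', R2 ++ [y0], ?_, ?_, ?_, ?_⟩
        · right; right; simp [insertTableau, hro, hrow2]
        · exact rowInsert_some_sorted x R1 R1' y0 hsort hxR1 hro
        · rw [htake]
          refine List.perm_iff_count.mpr fun c => ?_
          have h1 := List.perm_iff_count.1 hpermR c
          have h2 := List.perm_iff_count.1 hperm c
          simp only [List.count_append] at h1 h2 ⊢
          omega
        · intro y hy z hz hyz
          have hy' : y ∈ R1 ++ [x] := hpermR.subset (by simp [hy])
          rcases List.mem_append.1 hz with hz' | hz'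
          · rcases List.mem_append.1 hy' with hy'' | hy''
            · obtain ⟨a, b, hab, hbn, hba, hyb⟩ := hinv y hy'' z hz' hyz
              exact ⟨a, b, hab, by omega, hba, hyb⟩
            · simp at hy''; subst hy''
              obtain ⟨a, han, hav⟩ := hmemrow z (by simp [hz'])
              refine ⟨a, ⟨n, hnℓ⟩, (Fin.lt_def).2 han, by simp, ?_, le_refl _⟩
              rw [Fin.lt_def, hav]; exact hyz
          · simp at hz'
            refine ⟨a0, ⟨n, hnℓ⟩, (Fin.lt_def).2 ha0n, by simp, ?_, ?_⟩
            · rw [Fin.lt_def, ha0v]; exact hxy0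
            · rcases List.mem_append.1 hy' with hy'' | hy''
              · exact not_lt.1 (rowInsert_some_min x R1 R1' y0 hsort hro y hy'' (hz' ▸ hyz))
              · simp at hy''; omega


/-- For a `3 2 1`-avoiding `σ` and a deficiency `s` (i.e. `σ(s) < s`), the entry `s` lies
in the second row of the recording tableau if and only if there is a unique excedance
`r < s` with `σ(r) > σ(s)` such that at step `s` of the insertion process the value `σ(s)`
bumps `σ(r)` out of the first row.  (Such `(r,s)` is an RS pair.) -/
theorem stmt_19 {ℓ : ℕ} (σ : Equiv.Perm (Fin ℓ)) (hσ : Avoids321 σ)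
    (s : Fin ℓ) (hs : σ s < s) :
    (RSsteps (permWord σ)).2.getD (s : ℕ) 5 = 1 ↔
      ∃! r : Fin ℓ, r < s ∧ σ s < σ r ∧ r < σ r ∧
        (rowInsert (σ s : ℕ) (((RSsteps ((permWord σ).take s)).1).headD [])).2
          = some (σ r : ℕ) := by
  have hnℓ : (s : ℕ) < ℓ := s.isLt
  set n : ℕ := (s : ℕ) with hn
  set x : ℕ := (σ s : ℕ) with hx
  have hxn : x < n := hs
  have htake : (permWord σ).take (n+1) = (permWord σ).take n ++ [x] := by
    have h := take_succ_permWord σ hnℓ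
    simpa [Fin.eta] using h
  have hlen : (RSsteps ((permWord σ).take n)).2.length = n := by
    rw [RSsteps_snd_length, List.length_take]
    simp [permWord]
    omega
  have hgetD : (RSsteps (permWord σ)).2.getD n 5
      = (insertTableau x (RSsteps ((permWord σ).take n)).1).2 := by
    obtain ⟨t, ht⟩ := RSsteps_prefix ((permWord σ).take (n+1)) ((permWord σ).drop (n+1))
    conv_lhs => rw [(List.take_append_drop (n+1) (permWord σ)).symm]
    rw [ht, htake, RSsteps_concat]
    rw [List.getD_eq_getElem?_getD, List.append_assoc,
      List.getElem?_append_right hlen.le]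
    simp [hlen]
  obtain ⟨R1, R2, hshape, hsort, hperm, hinv⟩ := tabInv σ hσ n (le_of_lt hnℓ)
  have hlen' : ((permWord σ).take n).length = n := by
    simp [permWord]; omega
  rcases hshape with ⟨hT0, hR1, hR2⟩ | ⟨hT1, hR2⟩ | hT2
  · -- impossible : the prefix is nonempty
    exfalso
    subst hR1; subst hR2
    have := hperm.length_eq
    rw [hlen'] at this
    simp at this
    omega
  · -- T = [R1]
    rw [hgetD, hT1]
    rcases hro : rowInsert x R1 with ⟨R1', _ | y0⟩
    · rw [show (insertTableau x [R1]).2 = 0 from by simp [insertTableau, hro]]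
      simp only [List.headD_cons]
      constructor
      · intro h; exact absurd h (by simp)
      · rintro ⟨r, ⟨_, _, _, heq⟩, _⟩
        rw [hro] at heq
        simp at heq
    · obtain ⟨hxy0, hy0R1, hpermR⟩ := rowInsert_some_spec x R1 R1' y0 hro
      obtain ⟨a0, ha0n, ha0v⟩ :=
        mem_take_permWord σ (le_of_lt hnℓ) (hperm.subset (List.mem_append.2 (Or.inl hy0R1)))
      have hr_lt : a0 < s := by rw [Fin.lt_def]; exact ha0n
      have hσlt : σ s < σ a0 := by rw [Fin.lt_def, ha0v]; exact hxy0
      have hexc : a0 < σ a0 := excedance_of_bump hσ hr_lt hσlt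
      rw [show (insertTableau x [R1]).2 = 1 from by simp [insertTableau, hro]]
      simp only [List.headD_cons]
      constructor
      · intro _
        refine ⟨a0, ⟨hr_lt, hσlt, hexc, by rw [hro, ha0v]⟩, ?_⟩
        rintro r' ⟨_, _, _, heq⟩
        rw [hro] at heq
        have hv : y0 = (σ r' : ℕ) := by simpa using heq
        have : σ r' = σ a0 := Fin.val_injective (hv.symm.trans ha0v.symm)
        exact σ.injective this
      · intro _; trivial
  · -- T = [R1, R2]
    rw [hgetD, hT2]
    rcases hro : rowInsert x R1 with ⟨R1', _ | y0⟩
    · rw [show (insertTableau x [R1, R2]).2 = 0 from by simp [insertTableau, hro]]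
      simp only [List.headD_cons]
      constructor
      · intro h; exact absurd h (by simp)
      · rintro ⟨r, ⟨_, _, _, heq⟩, _⟩
        rw [hro] at heq
        simp at heq
    · obtain ⟨hxy0, hy0R1, hpermR⟩ := rowInsert_some_spec x R1 R1' y0 hro
      obtain ⟨a0, ha0n, ha0v⟩ :=
        mem_take_permWord σ (le_of_lt hnℓ) (hperm.subset (List.mem_append.2 (Or.inl hy0R1)))
      have hr_lt : a0 < s := by rw [Fin.lt_def]; exact ha0n
      have hσlt : σ s < σ a0 := by rw [Fin.lt_def, ha0v]; exact hxy0
      have hexc : a0 < σ a0 := excedance_of_bump hσ hr_lt hσlt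
      have hnb : ∀ z ∈ R2, ¬ y0 < z := by
        intro z hz hlt
        obtain ⟨a, b, hab, hbn, hba, hyb⟩ := hinv y0 hy0R1 z hz hlt
        have hbs : b < s := by rw [Fin.lt_def]; omega
        have hlt2 : σ b < σ s := legal_step hσ hab hbs hba
        have : (σ b : ℕ) < x := hlt2
        omega
      have hrow2 := rowInsert_none_of_forall y0 R2 hnb
      rw [show (insertTableau x [R1, R2]).2 = 1 from by
        simp [insertTableau, hro, hrow2]]
      simp only [List.headD_cons]
      constructor
      · intro _
        refine ⟨a0, ⟨hr_lt, hσlt, hexc, by rw [hro, ha0v]⟩, ?_⟩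
        rintro r' ⟨_, _, _, heq⟩
        rw [hro] at heq
        have hv : y0 = (σ r' : ℕ) := by simpa using heq
        have : σ r' = σ a0 := Fin.val_injective (hv.symm.trans ha0v.symm)
        exact σ.injective this
      · intro _; trivial
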